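/- Suppose F = f + Ψ where f : ℝⁿ → ℝ is convex and L-smooth (L > 0) and Ψ : ℝⁿ → ℝ ∪ {+∞} is proper, closed and convex, and suppose F attains its minimum at x*. Let z₀, y₁ ∈ ℝⁿ, and for k ≥ 1 define z̄_{k−1} = z_{k−1} − G_{1/L}(z_{k−1})/L and γ_k = (k+1)/(2L); suppose z_k lies on the affine line through z̄_{k−1} and y_k and satisfies ⟨G_{1/L}(z_k), y_k − z_k⟩ ≥ 0 and −⟨G_{1/L}(z_k), z̄_{k−1} − z_k⟩ ≤ 0; and set y_{k+1} = y_k − γ_k G_{1/L}(z_k). Then for all k ≥ 1, ‖y_{k+1} − x*‖² + (k+1)(k+2)(F(z̄_k) − F(x*))/(2L) ≤ ‖y_k − x*‖² + k(k+1)(F(z̄_{k−1}) − F(x*))/(2L). -/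

import Mathlib

open scoped RealInnerProductSpace

private lemma aux_limit (A C : ℝ) (hC : 0 ≤ C)
    (h : ∀ l : ℝ, 0 < l → l < 1 → A ≤ l * C) : A ≤ 0 := by
  rcases eq_or_lt_of_le hC with hC0 | hC0
  · simpa [← hC0] using h (1/2) one_half_pos one_half_lt_one
  · refine le_of_forall_pos_le_add fun ε hε => ?_
    have hl0 : 0 < min (ε / C) (1/2) := lt_min (div_pos hε hC0) one_half_pos
    have hl1 : min (ε / C) (1/2) < 1 := lt_of_le_of_lt (min_le_right _ _) (by norm_num)
    have h1 := h _ hl0 hl1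
    have h2 : min (ε / C) (1/2) * C ≤ ε := by
      calc min (ε / C) (1/2) * C ≤ (ε / C) * C :=
            mul_le_mul_of_nonneg_right (min_le_left _ _) hC
        _ = ε := by field_simp
    linarith

set_option maxHeartbeats 1600000


open scoped RealInnerProductSpace

/-- potential decrease for geometric descent in the non-strongly
convex composite setting. -/
theorem geometric_descent_convex_potential {n : ℕ} (L : ℝ) (hL : 0 < L)
    (f : EuclideanSpace ℝ (Fin n) → ℝ)
    (f' : EuclideanSpace ℝ (Fin n) → EuclideanSpace ℝ (Fin n))
    (hdiff : ∀ x, HasGradientAt f (f' x) x)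
    (hfconvex : ConvexOn ℝ Set.univ f)
    (hsmooth : ∀ x y : EuclideanSpace ℝ (Fin n),
      |f x - f y - ⟪f' y, x - y⟫| ≤ L / 2 * ‖x - y‖ ^ 2)
    (Ψ : EuclideanSpace ℝ (Fin n) → EReal)
    (hproper : (∀ x, Ψ x ≠ ⊥) ∧ (∃ x, Ψ x ≠ ⊤))
    (hclosed : LowerSemicontinuous Ψ)
    (hconvex : ∀ x y : EuclideanSpace ℝ (Fin n), ∀ a b : ℝ, 0 ≤ a → 0 ≤ b → a + b = 1 →
      Ψ (a • x + b • y) ≤ (a : EReal) * Ψ x + (b : EReal) * Ψ y)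
    (prox : ℝ → EuclideanSpace ℝ (Fin n) → EuclideanSpace ℝ (Fin n))
    (hprox : ∀ t : ℝ, 0 < t → ∀ x z : EuclideanSpace ℝ (Fin n),
      Ψ (prox t x) + ((‖x - prox t x‖ ^ 2 / (2 * t) : ℝ) : EReal)
        ≤ Ψ z + ((‖x - z‖ ^ 2 / (2 * t) : ℝ) : EReal))
    (F : EuclideanSpace ℝ (Fin n) → EReal)
    (hF : ∀ x, F x = (f x : EReal) + Ψ x)
    (G : ℝ → EuclideanSpace ℝ (Fin n) → EuclideanSpace ℝ (Fin n))
    (hG : ∀ t x, G t x = t⁻¹ • (x - prox t (x - t • f' x)))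
    (xstar : EuclideanSpace ℝ (Fin n)) (hxstar : ∀ w, F xstar ≤ F w)
    (z y : ℕ → EuclideanSpace ℝ (Fin n))
    -- `z_k` lies on the affine line through `z̄_{k−1}` and `y_k` and satisfies
    -- the two sign conditions of the line search
    (hzline : ∀ k : ℕ, 1 ≤ k → ∃ s : ℝ,
      z k = (z (k - 1) - (1 / L) • G (1 / L) (z (k - 1)))
        + s • (y k - (z (k - 1) - (1 / L) • G (1 / L) (z (k - 1)))))
    (hzsign : ∀ k : ℕ, 1 ≤ k →
      0 ≤ ⟪G (1 / L) (z k), y k - z k⟫ ∧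
      -⟪G (1 / L) (z k), (z (k - 1) - (1 / L) • G (1 / L) (z (k - 1))) - z k⟫ ≤ 0)
    (hyupd : ∀ k : ℕ, 1 ≤ k →
      y (k + 1) = y k - (((k : ℝ) + 1) / (2 * L)) • G (1 / L) (z k)) :
    ∀ k : ℕ, 1 ≤ k →
      ((‖y (k + 1) - xstar‖ ^ 2 : ℝ) : EReal)
          + ((((k : ℝ) + 1) * ((k : ℝ) + 2) / (2 * L) : ℝ) : EReal)
            * (F (z k - (1 / L) • G (1 / L) (z k)) - F xstar)
        ≤ ((‖y k - xstar‖ ^ 2 : ℝ) : EReal)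
          + (((k : ℝ) * ((k : ℝ) + 1) / (2 * L) : ℝ) : EReal)
            * (F (z (k - 1) - (1 / L) • G (1 / L) (z (k - 1))) - F xstar) := by
  
  intro k hk
  have hLne : L ≠ 0 := ne_of_gt hL
  have ht : (0:ℝ) < 1 / L := by positivity
  -- convexity inequality for f (derived from convexity + smoothness, no limits on derivatives)
  have hconv : ∀ x u : EuclideanSpace ℝ (Fin n), f x + ⟪f' x, u - x⟫ ≤ f u := by
    intro x u
    have key : f x + ⟪f' x, u - x⟫ - f u ≤ 0 := by
      apply aux_limit _ (L / 2 * ‖u - x‖ ^ 2) (by positivity)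
      intro l hl0 hl1
      have hw : l • u + (1 - l) • x - x = l • (u - x) := by module
      have hs := hsmooth (l • u + (1 - l) • x) x
      rw [abs_le] at hs
      have hcv := hfconvex.2 (Set.mem_univ u) (Set.mem_univ x) hl0.le
        (by linarith : (0:ℝ) ≤ 1 - l) (by ring)
      simp only [smul_eq_mul] at hcv
      have hin : ⟪f' x, l • u + (1 - l) • x - x⟫ = l * ⟪f' x, u - x⟫ := by
        rw [hw, real_inner_smul_right]
      have hnr : ‖l • u + (1 - l) • x - x‖ ^ 2 = l ^ 2 * ‖u - x‖ ^ 2 := by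
        rw [hw, norm_smul, Real.norm_eq_abs, abs_of_pos hl0, mul_pow]
      rw [hin, hnr] at hs
      have h1 : l * (f x + ⟪f' x, u - x⟫ - f u) ≤ l * (l * (L / 2 * ‖u - x‖ ^ 2)) := by
        linarith [hs.1, hcv]
      exact (mul_le_mul_iff_right₀ hl0).mp h1
    linarith
  -- finiteness of Ψ at prox points
  obtain ⟨x₀, hx₀⟩ := hproper.2
  have hproxfin : ∀ v, ∃ s : ℝ, Ψ (prox (1/L) v) = (s : EReal) := by
    intro v
    have h := hprox (1/L) ht v x₀
    have hne : Ψ (prox (1/L) v) ≠ ⊤ := by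
      intro htop
      have hlt : Ψ x₀ + ((‖v - x₀‖ ^ 2 / (2 * (1/L)) : ℝ) : EReal) < ⊤ :=
        EReal.add_lt_top hx₀ (EReal.coe_ne_top _)
      rw [htop, EReal.top_add_coe] at h
      exact (not_le_of_gt hlt) h
    exact ⟨(Ψ (prox (1/L) v)).toReal, (EReal.coe_toReal hne (hproper.1 _)).symm⟩
  -- subgradient inequality for Ψ at prox points
  have hsub : ∀ v u : EuclideanSpace ℝ (Fin n), ∀ r s : ℝ, Ψ u = (r : EReal) →
      Ψ (prox (1/L) v) = (s : EReal) →
      s + ⟪v - prox (1/L) v, u - prox (1/L) v⟫ * L ≤ r := by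
    intro v u r s hu hp
    have key : s + ⟪v - prox (1/L) v, u - prox (1/L) v⟫ * L - r ≤ 0 := by
      apply aux_limit _ (‖u - prox (1/L) v‖ ^ 2 * L / 2) (by positivity)
      intro l hl0 hl1
      have hpr := hprox (1/L) ht v ((1 - l) • prox (1/L) v + l • u)
      have hcx := hconvex (prox (1/L) v) u (1 - l) l (by linarith) hl0.le (by ring)
      rw [hu, hp] at hcx
      rw [hp] at hpr
      have hcx' : Ψ ((1 - l) • prox (1/L) v + l • u) ≤ (((1 - l) * s + l * r : ℝ) : EReal) := by
        rw [EReal.coe_add, EReal.coe_mul, EReal.coe_mul]; exact hcx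
      have hchain : ((s + ‖v - prox (1/L) v‖ ^ 2 / (2 * (1/L)) : ℝ) : EReal)
          ≤ (((1 - l) * s + l * r + ‖v - ((1 - l) • prox (1/L) v + l • u)‖ ^ 2 / (2 * (1/L)) : ℝ) : EReal) := by
        rw [EReal.coe_add, EReal.coe_add]
        exact le_trans hpr (add_le_add_left hcx' _)
      rw [EReal.coe_le_coe_iff] at hchain
      have hnr : ‖v - ((1 - l) • prox (1/L) v + l • u)‖ ^ 2
          = ‖v - prox (1/L) v‖ ^ 2 - 2 * (l * ⟪v - prox (1/L) v, u - prox (1/L) v⟫)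
            + l ^ 2 * ‖u - prox (1/L) v‖ ^ 2 := by
        have h1 : v - ((1 - l) • prox (1/L) v + l • u)
            = (v - prox (1/L) v) - l • (u - prox (1/L) v) := by module
        rw [h1, norm_sub_sq_real, real_inner_smul_right, norm_smul, Real.norm_eq_abs,
          abs_of_pos hl0, mul_pow]
      rw [hnr] at hchain
      have hdiv : ∀ a : ℝ, a / (2 * (1/L)) = a * L / 2 := by
        intro a
        rw [div_eq_div_iff (by positivity) (by norm_num)]
        field_simp
      rw [hdiv, hdiv] at hchain
      have h1 : l * (s + ⟪v - prox (1/L) v, u - prox (1/L) v⟫ * L - r)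
          ≤ l * (l * (‖u - prox (1/L) v‖ ^ 2 * L / 2)) := by linarith [hchain]
      exact (mul_le_mul_iff_right₀ hl0).mp h1
    linarith
  -- prox point identity
  have hLinv : (1/L) * L = 1 := by field_simp
  have hpeq : ∀ x : EuclideanSpace ℝ (Fin n),
      prox (1/L) (x - (1/L) • f' x) = x - (1/L) • G (1/L) x := by
    intro x
    rw [hG, smul_smul, mul_inv_cancel₀ (ne_of_gt ht), one_smul]
    abel
  -- fundamental prox-gradient inequality
  have hfund : ∀ x u : EuclideanSpace ℝ (Fin n), ∀ r s : ℝ, Ψ u = (r : EReal) →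
      Ψ (x - (1/L) • G (1/L) x) = (s : EReal) →
      f (x - (1/L) • G (1/L) x) + s
        ≤ f u + r + ⟪G (1/L) x, x - u⟫ - 1/(2*L) * ‖G (1/L) x‖ ^ 2 := by
    intro x u r s hu hp
    have hpe : prox (1/L) (x - (1/L) • f' x) = x - (1/L) • G (1/L) x := hpeq x
    have h1 := hconv x u
    have h2 := (abs_le.mp (hsmooth (x - (1/L) • G (1/L) x) x)).2
    have h3 := hsub (x - (1/L) • f' x) u r s hu (by rw [hpe]; exact hp)
    rw [hpe] at h3
    -- rewrite the subgradient inner product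
    have e1 : (x - (1/L) • f' x) - (x - (1/L) • G (1/L) x)
        = (1/L) • (G (1/L) x - f' x) := by module
    have e3 : u - (x - (1/L) • G (1/L) x) = (u - x) + (1/L) • G (1/L) x := by module
    have e4 : ⟪(x - (1/L) • f' x) - (x - (1/L) • G (1/L) x), u - (x - (1/L) • G (1/L) x)⟫ * L
        = ⟪G (1/L) x, u - x⟫ + (1/L) * ‖G (1/L) x‖ ^ 2 - ⟪f' x, u - x⟫
          - (1/L) * ⟪f' x, G (1/L) x⟫ := by
      rw [e1, e3, real_inner_smul_left, mul_comm (1/L), mul_assoc, hLinv, mul_one,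
        inner_add_right, inner_sub_left, inner_sub_left, real_inner_smul_right,
        real_inner_smul_right, real_inner_self_eq_norm_sq]
      ring
    rw [e4] at h3
    -- rewrite the smoothness terms
    have e5 : (x - (1/L) • G (1/L) x) - x = -((1/L) • G (1/L) x) := by module
    have e6 : ⟪f' x, (x - (1/L) • G (1/L) x) - x⟫ = -((1/L) * ⟪f' x, G (1/L) x⟫) := by
      rw [e5, inner_neg_right, real_inner_smul_right]
    have e7 : ‖(x - (1/L) • G (1/L) x) - x‖ ^ 2 = (1/L) ^ 2 * ‖G (1/L) x‖ ^ 2 := by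
      rw [e5, norm_neg, norm_smul, Real.norm_eq_abs, abs_of_pos ht, mul_pow]
    rw [e6, e7] at h2
    have e8 : L / 2 * ((1/L) ^ 2 * ‖G (1/L) x‖ ^ 2) = 1/(2*L) * ‖G (1/L) x‖ ^ 2 := by
      field_simp
    rw [e8] at h2
    have e9 : ⟪G (1/L) x, x - u⟫ = -⟪G (1/L) x, u - x⟫ := by
      rw [← neg_sub u x, inner_neg_right]
    have e10 : (1/L) * ‖G (1/L) x‖ ^ 2
        = 1/(2*L) * ‖G (1/L) x‖ ^ 2 + 1/(2*L) * ‖G (1/L) x‖ ^ 2 := by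
      field_simp; ring
    rw [e9]
    linarith [h1, h2, h3, e10]
  -- real values at the three relevant points
  obtain ⟨s1, hψ1⟩ := hproxfin (z k - (1/L) • f' (z k))
  rw [hpeq (z k)] at hψ1
  obtain ⟨s0, hψ0⟩ := hproxfin (z (k-1) - (1/L) • f' (z (k-1)))
  rw [hpeq (z (k-1))] at hψ0
  have hFzb : F (z k - (1/L) • G (1/L) (z k)) = ((f (z k - (1/L) • G (1/L) (z k)) + s1 : ℝ) : EReal) := by
    rw [hF, hψ1, EReal.coe_add]
  have hFzbp : F (z (k-1) - (1/L) • G (1/L) (z (k-1)))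
      = ((f (z (k-1) - (1/L) • G (1/L) (z (k-1))) + s0 : ℝ) : EReal) := by
    rw [hF, hψ0, EReal.coe_add]
  -- Ψ xstar is finite
  have hψsne : Ψ xstar ≠ ⊤ := by
    intro htop
    have hxs := hxstar (z k - (1/L) • G (1/L) (z k))
    rw [hFzb, hF xstar, htop,
      EReal.add_top_iff_ne_bot.mpr (EReal.coe_ne_bot _), top_le_iff] at hxs
    exact (EReal.coe_ne_top _) hxs
  obtain ⟨sstar, hψs⟩ : ∃ sstar : ℝ, Ψ xstar = (sstar : EReal) :=
    ⟨(Ψ xstar).toReal, (EReal.coe_toReal hψsne (hproper.1 _)).symm⟩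
  have hFxs : F xstar = ((f xstar + sstar : ℝ) : EReal) := by
    rw [hF, hψs, EReal.coe_add]
  -- the two fundamental inequalities
  have hA := hfund (z k) xstar sstar s1 hψs hψ1
  have hB := hfund (z k) (z (k-1) - (1/L) • G (1/L) (z (k-1))) s0 s1 hψ0 hψ1
  obtain ⟨hs1, hs2⟩ := hzsign k hk
  -- sign manipulations
  have hsgn2 : ⟪G (1/L) (z k), z k - (z (k-1) - (1/L) • G (1/L) (z (k-1)))⟫ ≤ 0 := by
    rw [(neg_sub (z (k-1) - (1/L) • G (1/L) (z (k-1))) (z k)).symm, inner_neg_right]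
    linarith
  have hinid : ⟪G (1/L) (z k), z k - xstar⟫ + ⟪G (1/L) (z k), y k - z k⟫
      = ⟪G (1/L) (z k), y k - xstar⟫ := by
    rw [← inner_add_right]
    congr 1
    abel
  have hA' : f (z k - (1/L) • G (1/L) (z k)) + s1
      ≤ (f xstar + sstar) + ⟪G (1/L) (z k), y k - xstar⟫
        - 1/(2*L) * ‖G (1/L) (z k)‖ ^ 2 := by linarith
  have hB' : f (z k - (1/L) • G (1/L) (z k)) + s1
      ≤ (f (z (k-1) - (1/L) • G (1/L) (z (k-1))) + s0)
        - 1/(2*L) * ‖G (1/L) (z k)‖ ^ 2 := by linarith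
  -- norm expansion for the y update
  have hyy : y (k+1) - xstar = (y k - xstar) - (((k:ℝ)+1)/(2*L)) • G (1/L) (z k) := by
    rw [hyupd k hk]; abel
  have hγ : (0:ℝ) ≤ ((k:ℝ)+1)/(2*L) := by positivity
  have hswap : ⟪y k - xstar, G (1/L) (z k)⟫ = ⟪G (1/L) (z k), y k - xstar⟫ :=
    real_inner_comm _ _
  have hnorm : ‖y (k+1) - xstar‖ ^ 2
      = ‖y k - xstar‖ ^ 2 - 2 * ((((k:ℝ)+1)/(2*L)) * ⟪G (1/L) (z k), y k - xstar⟫)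
        + (((k:ℝ)+1)/(2*L)) ^ 2 * ‖G (1/L) (z k)‖ ^ 2 := by
    rw [hyy, norm_sub_sq_real, real_inner_smul_right, hswap, norm_smul, Real.norm_eq_abs,
      abs_of_nonneg hγ, mul_pow]
  -- reduce the goal to a real inequality
  rw [hFzb, hFzbp, hFxs, ← EReal.coe_sub, ← EReal.coe_sub, ← EReal.coe_mul, ← EReal.coe_mul,
    ← EReal.coe_add, ← EReal.coe_add, EReal.coe_le_coe_iff, hnorm]
  have t1 := mul_le_mul_of_nonneg_left hA'
    (show (0:ℝ) ≤ 2 * ((k:ℝ)+1) * (1/(2*L)) by positivity)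
  have t2 := mul_le_mul_of_nonneg_left hB'
    (show (0:ℝ) ≤ (k:ℝ) * ((k:ℝ)+1) * (1/(2*L)) by positivity)
  have t3 : (0:ℝ) ≤ ((k:ℝ)+1) * (1/(2*L))^2 * ‖G (1/L) (z k)‖ ^ 2 := by positivity
  set kk := (k:ℝ) with hkk
  set gI := ⟪G (1/L) (z k), y k - xstar⟫ with hgI
  set gN := ‖G (1/L) (z k)‖ ^ 2 with hgN
  set fb := f (z k - (1/L) • G (1/L) (z k)) with hfb
  set fp := f (z (k-1) - (1/L) • G (1/L) (z (k-1))) with hfp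
  set fsr := f xstar with hfsr
  set n1 := ‖y k - xstar‖ ^ 2 with hn1
  have key : (n1 + kk*(kk+1)/(2*L) * (fp + s0 - (fsr + sstar)))
      - (n1 - 2 * ((kk+1)/(2*L) * gI) + ((kk+1)/(2*L))^2 * gN
        + (kk+1)*(kk+2)/(2*L) * (fb + s1 - (fsr + sstar)))
      = (2 * (kk+1) * (1/(2*L)) * (fsr + sstar + gI - 1/(2*L) * gN)
          - 2 * (kk+1) * (1/(2*L)) * (fb + s1))
        + (kk * (kk+1) * (1/(2*L)) * (fp + s0 - 1/(2*L) * gN)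
          - kk * (kk+1) * (1/(2*L)) * (fb + s1))
        + (kk+1) * (1/(2*L))^2 * gN := by ring
  linarith [t1, t2, t3, key]
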